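/- Let a > 0, c ≠ 0, σ ≤ μ, σ < −μ, μ ≠ 0, and δ ∈ (0, |a/c|). If P(δ,c,2) < δ, then P(δ,c,2) = I1(−δμ/σ, δ) when r D1 − 1 ≤ −μ/σ, and P(δ,c,2) = I2(−δμ/σ, δ) when r D1 − 1 > −μ/σ. -/

import Mathlib

/-- The constant `D₁ = (|μ|+|σ|)(1 + (|μ|+|σ|)|c|δ)`. -/
noncomputable def D1 (μ σ c δ : ℝ) : ℝ := (|μ| + |σ|) * (1 + (|μ| + |σ|) * |c| * δ)

/-- The constant `D₂ = (D₁² + (|μ|+|σ|)³|c|δ)(1 + |σc|δ)`. -/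
noncomputable def D2 (μ σ c δ : ℝ) : ℝ :=
  ((D1 μ σ c δ) ^ 2 + (|μ| + |σ|) ^ 3 * |c| * δ) * (1 + |σ * c| * δ)

/-- The profile `η̄` used to define `η_{(3)}`. -/
noncomputable def etabar (δ d1 d2 s : ℝ) : ℝ :=
  if s ≤ 0 then -δ
  else if s < d1 / d2 then -δ + δ * d2 / 2 * s ^ 2
  else -δ - δ * d1 ^ 2 / (2 * d2) + δ * d1 * s

/-- The shift `θ_shift` used to define `η_{(3)}`. -/
noncomputable def thetaShift (δ d1 d2 uh : ℝ) : ℝ :=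
  if uh ≤ -δ + δ * d1 ^ 2 / (2 * d2) then Real.sqrt (2 * (uh + δ) / (d2 * δ))
  else (uh + δ + δ * d1 ^ 2 / (2 * d2)) / (d1 * δ)

/-- The extremal forcing functions `η_{(k)}` for `k = 1, 2, 3`. -/
noncomputable def etaK (μ σ c δ uh : ℝ) : ℕ → ℝ → ℝ
  | 1, θ => if θ < 0 then -δ else uh
  | 2, θ => max (uh + D1 μ σ c δ * δ * θ) (-δ)
  | 3, θ => etabar δ (D1 μ σ c δ) (D2 μ σ c δ)
      (θ + thetaShift δ (D1 μ σ c δ) (D2 μ σ c δ) uh)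
  | _, _ => 0

/-- `I(û, δ, ĉ, k) = û e^{μ(a+ĉδ)} + σ ∫_{-(a+ĉδ)}^{0} e^{-μθ} η_{(k)}(θ) dθ`
(the constants `D₁, D₂` in `η_{(k)}` are computed from `|c|`, while `ĉ` only enters
the integration limits). -/
noncomputable def Ifun (μ σ c a δ chat uh : ℝ) (k : ℕ) : ℝ :=
  uh * Real.exp (μ * (a + chat * δ)) +
    σ * ∫ θ in (-(a + chat * δ))..(0 : ℝ), Real.exp (-μ * θ) * etaK μ σ c δ uh k θ

/-- `P(δ, c, k) = sup_{û ∈ [-δ, -μδ/σ]} I(û, δ, |c|, k)`. -/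
noncomputable def Pfun (μ σ c a δ : ℝ) (k : ℕ) : ℝ :=
  sSup ((fun uh => Ifun μ σ c a δ |c| uh k) '' Set.Icc (-δ) (-μ * δ / σ))

/-- `r = a + |c|δ`. -/
noncomputable def rr (a c δ : ℝ) : ℝ := a + |c| * δ

/-- The explicit one-piece integral `I₁(û, δ)` (for `μ ≠ 0`). -/
noncomputable def I1fun (μ σ c a δ uh : ℝ) : ℝ :=
  uh * (Real.exp (μ * rr a c δ) + σ / μ * (Real.exp (μ * rr a c δ) - 1)) +
    σ / μ * D1 μ σ c δ * δ *
      (1 / μ * (Real.exp (μ * rr a c δ) - 1) - rr a c δ * Real.exp (μ * rr a c δ))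

/-- The explicit two-piece integral `I₂(û, δ)` (for `μ ≠ 0`). -/
noncomputable def I2fun (μ σ c a δ uh : ℝ) : ℝ :=
  uh * (Real.exp (μ * rr a c δ) - σ / μ) +
    σ / μ * δ * (D1 μ σ c δ / μ *
      (Real.exp (μ * (δ + uh) / (D1 μ σ c δ * δ)) - 1) - Real.exp (μ * rr a c δ))

open Real intervalIntegral

lemma linInt (μ K L x y : ℝ) (hμ : μ ≠ 0) :
    ∫ θ in x..y, Real.exp (-μ * θ) * (K + L * θ)
      = (-((K + L*y) * Real.exp (-μ*y) / μ) - L * Real.exp (-μ*y) / μ^2)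
        - (-((K + L*x) * Real.exp (-μ*x) / μ) - L * Real.exp (-μ*x) / μ^2) := by
  have h : ∀ θ : ℝ, HasDerivAt
      (fun t => -((K + L*t) * Real.exp (-μ*t) / μ) - L * Real.exp (-μ*t) / μ^2)
      (Real.exp (-μ*θ) * (K + L*θ)) θ := by
    intro θ
    have h1 : HasDerivAt (fun t : ℝ => -μ * t) (-μ) θ := by
      simpa using (hasDerivAt_id θ).const_mul (-μ)
    have he : HasDerivAt (fun t => Real.exp (-μ*t)) (Real.exp (-μ*θ) * (-μ)) θ := h1.exp
    have hl : HasDerivAt (fun t : ℝ => K + L * t) L θ := by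
      simpa using ((hasDerivAt_id θ).const_mul L).const_add K
    have hm := ((hl.mul he).div_const μ).neg
    have h2 := (he.const_mul L).div_const (μ^2)
    have h3 := hm.sub h2
    have h4 : Real.exp (-μ*θ) * (K + L*θ)
        = -((L * Real.exp (-μ * θ) + (K + L * θ) * (Real.exp (-μ * θ) * -μ)) / μ)
          - L * (Real.exp (-μ * θ) * -μ) / μ ^ 2 := by
      field_simp
      ring
    rw [h4]
    exact h3
  rw [intervalIntegral.integral_eq_sub_of_hasDerivAt (fun θ _ => h θ)
    ((Continuous.intervalIntegrable (by fun_prop) x y))]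

lemma onepiece (μ σ c a δ uh : ℝ) (hμ : μ ≠ 0) (hδ : 0 < δ)
    (hr : 0 ≤ a + |c| * δ)
    (hk : (a + |c| * δ) * (D1 μ σ c δ * δ) ≤ uh + δ) (hD : 0 ≤ D1 μ σ c δ) :
    Ifun μ σ c a δ |c| uh 2
      = uh * (Real.exp (μ * (a + |c| * δ)) + σ / μ * (Real.exp (μ * (a + |c| * δ)) - 1)) +
        σ / μ * D1 μ σ c δ * δ *
          (1 / μ * (Real.exp (μ * (a + |c| * δ)) - 1)
            - (a + |c| * δ) * Real.exp (μ * (a + |c| * δ))) := by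
  unfold Ifun
  have hcongr : Set.EqOn (fun θ => Real.exp (-μ*θ) * etaK μ σ c δ uh 2 θ)
      (fun θ => Real.exp (-μ*θ) * (uh + (D1 μ σ c δ * δ) * θ))
      (Set.uIcc (-(a + |c| * δ)) 0) := by
    intro θ hθ
    rw [Set.uIcc_of_le (by linarith)] at hθ
    have hmax : max (uh + D1 μ σ c δ * δ * θ) (-δ) = uh + D1 μ σ c δ * δ * θ := by
      apply max_eq_left
      have h5 : 0 ≤ (D1 μ σ c δ * δ) * (θ + (a + |c| * δ)) :=
        mul_nonneg (mul_nonneg hD hδ.le) (by linarith [hθ.1])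
      nlinarith [h5, hk]
    simp only [etaK, hmax]
  rw [intervalIntegral.integral_congr hcongr, linInt μ uh (D1 μ σ c δ * δ) _ _ hμ]
  rw [show -μ * -(a + |c| * δ) = μ * (a + |c| * δ) by ring, show -μ * (0:ℝ) = 0 by ring,
    Real.exp_zero]
  field_simp
  ring

lemma twopiece (μ σ c a δ uh : ℝ) (hμ : μ ≠ 0) (hδ : 0 < δ)
    (hr : 0 ≤ a + |c| * δ) (hD : 0 < D1 μ σ c δ)
    (h0 : 0 ≤ uh + δ) (hk : uh + δ ≤ (a + |c| * δ) * (D1 μ σ c δ * δ)) :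
    Ifun μ σ c a δ |c| uh 2
      = uh * (Real.exp (μ * (a + |c| * δ)) - σ / μ) +
        σ / μ * δ * (D1 μ σ c δ / μ *
          (Real.exp (μ * (δ + uh) / (D1 μ σ c δ * δ)) - 1)
            - Real.exp (μ * (a + |c| * δ))) := by
  have hDδ : 0 < D1 μ σ c δ * δ := mul_pos hD hδ
  set T : ℝ := -((uh + δ) / (D1 μ σ c δ * δ)) with hT
  have hT0 : T ≤ 0 := by
    rw [hT]; simp only [neg_nonpos]; positivity
  have hTr : -(a + |c| * δ) ≤ T := by
    rw [hT, neg_le_neg_iff, div_le_iff₀ hDδ]; linarith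
  have hDT : D1 μ σ c δ * δ * T = -(uh + δ) := by
    rw [hT]; field_simp
  have hcont : Continuous (fun θ => Real.exp (-μ*θ) * etaK μ σ c δ uh 2 θ) := by
    simp only [etaK]; fun_prop
  unfold Ifun
  rw [← intervalIntegral.integral_add_adjacent_intervals (b := T)
    (hcont.intervalIntegrable _ _) (hcont.intervalIntegrable _ _)]
  have hcongr1 : Set.EqOn (fun θ => Real.exp (-μ*θ) * etaK μ σ c δ uh 2 θ)
      (fun θ => Real.exp (-μ*θ) * ((-δ) + 0 * θ)) (Set.uIcc (-(a + |c| * δ)) T) := by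
    intro θ hθ
    rw [Set.uIcc_of_le hTr] at hθ
    have hmax : max (uh + D1 μ σ c δ * δ * θ) (-δ) = -δ := by
      apply max_eq_right
      have h5 : D1 μ σ c δ * δ * θ ≤ D1 μ σ c δ * δ * T :=
        mul_le_mul_of_nonneg_left hθ.2 hDδ.le
      linarith [hDT ▸ h5]
    simp only [etaK, hmax]
    ring_nf
  have hcongr2 : Set.EqOn (fun θ => Real.exp (-μ*θ) * etaK μ σ c δ uh 2 θ)
      (fun θ => Real.exp (-μ*θ) * (uh + (D1 μ σ c δ * δ) * θ)) (Set.uIcc T 0) := by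
    intro θ hθ
    rw [Set.uIcc_of_le hT0] at hθ
    have hmax : max (uh + D1 μ σ c δ * δ * θ) (-δ) = uh + D1 μ σ c δ * δ * θ := by
      apply max_eq_left
      have h5 : D1 μ σ c δ * δ * T ≤ D1 μ σ c δ * δ * θ :=
        mul_le_mul_of_nonneg_left hθ.1 hDδ.le
      linarith [hDT ▸ h5]
    simp only [etaK, hmax]
  rw [intervalIntegral.integral_congr hcongr1, intervalIntegral.integral_congr hcongr2,
    linInt μ (-δ) 0 _ _ hμ, linInt μ uh (D1 μ σ c δ * δ) _ _ hμ]
  rw [show -μ * -(a + |c| * δ) = μ * (a + |c| * δ) by ring, show -μ * (0:ℝ) = 0 by ring,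
    Real.exp_zero,
    show -μ * T = μ * (δ + uh) / (D1 μ σ c δ * δ) by rw [hT]; ring]
  rw [hDT]
  simp only [zero_mul]
  have hD' : D1 μ σ c δ ≠ 0 := hD.ne'
  have hδ' : δ ≠ 0 := hδ.ne'
  set E1 := Real.exp (μ * (a + |c| * δ)) with hE1
  set E2 := Real.exp (μ * (δ + uh) / (D1 μ σ c δ * δ)) with hE2
  field_simp
  ring

lemma mono_step (μ σ c a δ u1 u2 s : ℝ) (hμ : μ ≠ 0) (hσ : σ < 0) (hδ : 0 < δ)
    (hr : 0 ≤ a + |c| * δ) (hD : 0 < D1 μ σ c δ) (h12 : u1 ≤ u2)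
    (hs0 : 0 ≤ s) (hsr : s ≤ a + |c| * δ)
    (hs2 : u2 + δ ≤ D1 μ σ c δ * δ * s ∨ s = a + |c| * δ)
    (hE : 0 ≤ Real.exp (μ * (a + |c| * δ)) + σ * ∫ θ in (-s)..(0:ℝ), Real.exp (-μ * θ)) :
    Ifun μ σ c a δ |c| u1 2 ≤ Ifun μ σ c a δ |c| u2 2 := by
  have hcont : ∀ u : ℝ, Continuous (fun θ => Real.exp (-μ*θ) * etaK μ σ c δ u 2 θ) := by
    intro u; simp only [etaK]; fun_prop
  set r := a + |c| * δ with hrdef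
  set f1 := fun θ => Real.exp (-μ*θ) * etaK μ σ c δ u1 2 θ with hf1
  set f2 := fun θ => Real.exp (-μ*θ) * etaK μ σ c δ u2 2 θ with hf2
  set S := ∫ θ in (-s)..(0:ℝ), Real.exp (-μ * θ) with hS
  have i1 : ∀ x y : ℝ, IntervalIntegrable f1 MeasureTheory.volume x y :=
    fun x y => (hcont u1).intervalIntegrable x y
  have i2 : ∀ x y : ℝ, IntervalIntegrable f2 MeasureTheory.volume x y :=
    fun x y => (hcont u2).intervalIntegrable x y
  have hsub : (∫ θ in (-r)..(0:ℝ), f2 θ) - (∫ θ in (-r)..(0:ℝ), f1 θ)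
      = ∫ θ in (-r)..(0:ℝ), (f2 θ - f1 θ) :=
    (intervalIntegral.integral_sub (i2 _ _) (i1 _ _)).symm
  have hsplit : (∫ θ in (-r)..(0:ℝ), (f2 θ - f1 θ))
      = (∫ θ in (-r)..(-s), (f2 θ - f1 θ)) + ∫ θ in (-s)..(0:ℝ), (f2 θ - f1 θ) :=
    (intervalIntegral.integral_add_adjacent_intervals
      ((i2 _ _).sub (i1 _ _)) ((i2 _ _).sub (i1 _ _))).symm
  have hfirst : (∫ θ in (-r)..(-s), (f2 θ - f1 θ)) = 0 := by
    rcases hs2 with h | h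
    · have : Set.EqOn (fun θ => f2 θ - f1 θ) (fun _ => (0:ℝ)) (Set.uIcc (-r) (-s)) := by
        intro θ hθ
        rw [Set.uIcc_of_le (by linarith)] at hθ
        have hm2 : max (u2 + D1 μ σ c δ * δ * θ) (-δ) = -δ := by
          apply max_eq_right
          have h5 : D1 μ σ c δ * δ * θ ≤ D1 μ σ c δ * δ * (-s) := by
            apply mul_le_mul_of_nonneg_left hθ.2 (by positivity)
          nlinarith [h5, h]
        have hm1 : max (u1 + D1 μ σ c δ * δ * θ) (-δ) = -δ := by
          apply max_eq_right
          have h5 : D1 μ σ c δ * δ * θ ≤ D1 μ σ c δ * δ * (-s) := by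
            apply mul_le_mul_of_nonneg_left hθ.2 (by positivity)
          nlinarith [h5, h]
        simp only [hf1, hf2, etaK, hm1, hm2]
        ring
      rw [intervalIntegral.integral_congr this]
      simp
    · rw [hrdef] at *
      rw [h]
      simp
  have hsecond : (∫ θ in (-s)..(0:ℝ), (f2 θ - f1 θ))
      ≤ ∫ θ in (-s)..(0:ℝ), ((u2 - u1) * Real.exp (-μ * θ)) := by
    apply intervalIntegral.integral_mono_on (by linarith)
      ((i2 _ _).sub (i1 _ _)) (Continuous.intervalIntegrable (by fun_prop) _ _)
    intro θ hθ
    have hexp : 0 < Real.exp (-μ * θ) := Real.exp_pos _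
    have : etaK μ σ c δ u2 2 θ ≤ etaK μ σ c δ u1 2 θ + (u2 - u1) := by
      simp only [etaK]
      apply max_le
      · have : u1 + D1 μ σ c δ * δ * θ ≤ max (u1 + D1 μ σ c δ * δ * θ) (-δ) := le_max_left _ _
        linarith
      · have : -δ ≤ max (u1 + D1 μ σ c δ * δ * θ) (-δ) := le_max_right _ _
        linarith
    simp only [hf1, hf2]
    nlinarith [this, hexp]
  rw [intervalIntegral.integral_const_mul] at hsecond
  unfold Ifun
  rw [← hrdef, ← hf1, ← hf2]
  have hA : (∫ θ in (-r)..(0:ℝ), f2 θ) - (∫ θ in (-r)..(0:ℝ), f1 θ) ≤ (u2 - u1) * S := by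
    rw [hsub, hsplit, hfirst]; rw [← hS] at hsecond; linarith
  have h3 : 0 ≤ (-σ) * ((u2 - u1) * S
      - ((∫ θ in (-r)..(0:ℝ), f2 θ) - (∫ θ in (-r)..(0:ℝ), f1 θ))) :=
    mul_nonneg (by linarith) (by linarith)
  have h4 : 0 ≤ (u2 - u1) * (Real.exp (μ * r) + σ * S) := mul_nonneg (by linarith) (by rw [hS]; exact hE)
  nlinarith [h3, h4]

lemma expInt (μ x y : ℝ) (hμ : μ ≠ 0) :
    ∫ θ in x..y, Real.exp (-μ * θ)
      = (Real.exp (-μ*x) - Real.exp (-μ*y)) / μ := by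
  have h : (∫ θ in x..y, Real.exp (-μ * θ))
      = ∫ θ in x..y, Real.exp (-μ * θ) * (1 + 0 * θ) := by
    apply intervalIntegral.integral_congr
    intro θ _
    simp
  rw [h, linInt μ 1 0 x y hμ]
  field_simp
  ring

lemma Epos (μ σ D r s : ℝ) (hμ : 0 < μ) (hσ : σ < 0) (hD : μ - σ ≤ D)
    (hs0 : 0 ≤ s) (hsr : s ≤ r) (hsB : s ≤ (σ - μ)/(σ * D)) :
    0 ≤ Real.exp (μ*r) + σ/μ * (Real.exp (μ*s) - 1) := by
  have hDpos : 0 < D := by linarith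
  have heq : σ * ((σ - μ) / (σ * D)) = (σ - μ)/D := by
    rw [mul_div_assoc', mul_div_mul_left _ _ hσ.ne]
  have h1 : (σ - μ)/D ≤ σ * s := by
    have hstep := mul_le_mul_of_nonpos_left hsB hσ.le
    rw [heq] at hstep; exact hstep
  have h2 : -1 ≤ σ * s := le_trans ((le_div_iff₀ hDpos).mpr (by linarith)) h1
  have h3 : Real.exp (μ*s) - 1 ≤ μ * s * Real.exp (μ*s) := by
    have ha := Real.add_one_le_exp (-(μ*s))
    rw [Real.exp_neg] at ha
    have hp : 0 < Real.exp (μ*s) := Real.exp_pos _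
    have hb := mul_le_mul_of_nonneg_right ha hp.le
    rw [inv_mul_cancel₀ hp.ne'] at hb
    nlinarith [hb]
  have h4 : Real.exp (μ*s) ≤ Real.exp (μ*r) :=
    Real.exp_le_exp.mpr (by nlinarith)
  have h5 : σ * s * Real.exp (μ*s) ≤ σ/μ * (Real.exp (μ*s) - 1) := by
    rw [div_mul_eq_mul_div, le_div_iff₀ hμ]
    nlinarith [h3, Real.exp_pos (μ*s)]
  nlinarith [h5, h4, h2, Real.exp_pos (μ*s)]

lemma Eneg (μ σ D r s : ℝ) (hμ : μ < 0) (hσμ : σ ≤ μ) (hμσ : μ + σ < 0)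
    (hD : -(μ + σ) ≤ D) (hs0 : 0 ≤ s) (hsB : s ≤ (σ - μ)/(σ * D))
    (hE : Real.exp (μ*r) + σ/μ * (Real.exp (μ*s) - 1) < 0) :
    Real.exp (μ*r) + σ/μ * (Real.exp (μ*r) - 1) ≤ -1 := by
  have hσ : σ < 0 := by linarith
  have hDpos : 0 < D := by linarith
  have h2 : 1 - Real.exp (μ*s) ≤ -(μ*s) := by
    have := Real.add_one_le_exp (μ*s)
    linarith
  have hq : 0 < σ/μ := div_pos_of_neg_of_neg hσ hμ
  have h3 : Real.exp (μ*r) < -(σ*s) := by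
    have ha : σ/μ * (1 - Real.exp (μ*s)) ≤ σ/μ * (-(μ*s)) :=
      mul_le_mul_of_nonneg_left h2 hq.le
    have hb : σ/μ * (-(μ*s)) = -(σ*s) := by
      rw [div_mul_eq_mul_div, div_eq_iff hμ.ne]
      ring
    nlinarith [ha, hb, hE]
  have heq : σ * ((σ - μ) / (σ * D)) = (σ - μ)/D := by
    rw [mul_div_assoc', mul_div_mul_left _ _ hσ.ne]
  have h4 : -(σ*s) ≤ (μ - σ)/D := by
    have hstep := mul_le_mul_of_nonpos_left hsB hσ.le
    rw [heq] at hstep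
    have h5 : -(σ*s) ≤ -((σ - μ)/D) := by linarith
    calc -(σ*s) ≤ -((σ - μ)/D) := h5
      _ = (μ - σ)/D := by rw [← neg_div, neg_sub]
  have h6 : (μ - σ)/D ≤ (μ - σ)/(-(μ+σ)) :=
    div_le_div_of_nonneg_left (by linarith) (by linarith) hD
  have h7 : Real.exp (μ*r) < (μ - σ)/(-(μ+σ)) := by linarith
  have h8 : σ - μ ≤ (μ + σ) * Real.exp (μ*r) := by
    rw [lt_div_iff₀ (by linarith : (0:ℝ) < -(μ+σ))] at h7
    nlinarith [h7]
  have h9 : μ * (Real.exp (μ*r) + σ/μ * (Real.exp (μ*r) - 1) + 1)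
      = (μ + σ) * Real.exp (μ*r) - (σ - μ) := by
    rw [div_mul_eq_mul_div, mul_add, mul_add, mul_div_assoc',
      mul_div_cancel_left₀ _ hμ.ne]
    ring
  by_contra hx
  push_neg at hx
  have h10 : μ * (Real.exp (μ*r) + σ/μ * (Real.exp (μ*r) - 1) + 1) < 0 :=
    mul_neg_of_neg_of_pos hμ (by linarith)
  linarith [h9 ▸ h10, h8]

lemma Ifun_bdd (μ σ c a δ u : ℝ) (hμ : μ ≠ 0) (hσ : σ < 0) (hδ : 0 < δ)
    (hr : 0 ≤ a + |c| * δ) (hu : u ≤ δ) :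
    Ifun μ σ c a δ |c| u 2
      ≤ δ * Real.exp (μ*(a + |c| * δ))
        + σ * ∫ θ in (-(a + |c| * δ))..(0:ℝ), Real.exp (-μ*θ) * (-δ) := by
  unfold Ifun
  have h1 : u * Real.exp (μ*(a + |c| * δ)) ≤ δ * Real.exp (μ*(a + |c| * δ)) :=
    mul_le_mul_of_nonneg_right hu (Real.exp_pos _).le
  have h2 : (∫ θ in (-(a + |c| * δ))..(0:ℝ), Real.exp (-μ*θ) * (-δ))
      ≤ ∫ θ in (-(a + |c| * δ))..(0:ℝ), Real.exp (-μ*θ) * etaK μ σ c δ u 2 θ := by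
    apply intervalIntegral.integral_mono_on (by linarith)
      (Continuous.intervalIntegrable (by fun_prop) _ _)
      (Continuous.intervalIntegrable (by simp only [etaK]; fun_prop) _ _)
    intro θ _
    simp only [etaK]
    exact mul_le_mul_of_nonneg_left (le_max_right _ _) (Real.exp_pos _).le
  nlinarith [h1, h2, mul_le_mul_of_nonpos_left h2 hσ.le]

set_option maxHeartbeats 1000000 in
theorem stmt_9 (μ σ c a δ : ℝ) (ha : 0 < a) (hc : c ≠ 0)
    (h1 : σ ≤ μ) (h2 : σ < -μ) (hμ : μ ≠ 0)
    (hδ0 : 0 < δ) (hδ1 : δ < |a / c|)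
    (hP : Pfun μ σ c a δ 2 < δ) :
    (rr a c δ * D1 μ σ c δ - 1 ≤ -μ / σ →
      Pfun μ σ c a δ 2 = I1fun μ σ c a δ (-δ * μ / σ)) ∧
    (-μ / σ < rr a c δ * D1 μ σ c δ - 1 →
      Pfun μ σ c a δ 2 = I2fun μ σ c a δ (-δ * μ / σ)) := by
  -- basic sign facts
  have hσ : σ < 0 := by
    rcases le_or_gt 0 μ with h | h
    · linarith
    · linarith
  have habsμ : 0 < |μ| := abs_pos.mpr hμ
  have haσ : |σ| = -σ := abs_of_neg hσ
  have hcδ : 0 ≤ |c| * δ := mul_nonneg (abs_nonneg c) hδ0.le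
  have hr0 : 0 < a + |c| * δ := by linarith
  have habs_sum : 0 < |μ| + |σ| := by linarith [abs_nonneg σ]
  have hD : 0 < D1 μ σ c δ := by
    unfold D1
    have h3 : 0 ≤ (|μ| + |σ|) * |c| * δ :=
      mul_nonneg (mul_nonneg habs_sum.le (abs_nonneg c)) hδ0.le
    nlinarith
  have hDge : |μ| + |σ| ≤ D1 μ σ c δ := by
    unfold D1
    have h3 : 0 ≤ (|μ| + |σ|) * ((|μ| + |σ|) * |c| * δ) :=
      mul_nonneg habs_sum.le (mul_nonneg (mul_nonneg habs_sum.le (abs_nonneg c)) hδ0.le)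
    nlinarith
  have hDδ : 0 < D1 μ σ c δ * δ := mul_pos hD hδ0
  have hD' : D1 μ σ c δ ≠ 0 := hD.ne'
  have hδ' : δ ≠ 0 := hδ0.ne'
  have hσ' : σ ≠ 0 := hσ.ne
  have hue1 : -δ ≤ -μ * δ / σ := by
    rw [le_div_iff_of_neg hσ]
    nlinarith
  have hue2 : -μ * δ / σ ≤ δ := by
    rw [div_le_iff_of_neg hσ]
    nlinarith
  have hnum : 0 ≤ -μ * δ / σ + δ := by linarith
  set s : ℝ := min ((-μ * δ / σ + δ)/(D1 μ σ c δ * δ)) (a + |c| * δ) with hsdef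
  have hs0 : 0 ≤ s := le_min (div_nonneg hnum hDδ.le) hr0.le
  have hsr : s ≤ a + |c| * δ := min_le_right _ _
  have hsB : s ≤ (σ - μ)/(σ * D1 μ σ c δ) := by
    have heq : (-μ * δ / σ + δ)/(D1 μ σ c δ * δ) = (σ - μ)/(σ * D1 μ σ c δ) := by
      field_simp
      ring
    rw [hsdef, heq]
    exact min_le_left _ _
  have hs2 : -μ * δ / σ + δ ≤ D1 μ σ c δ * δ * s ∨ s = a + |c| * δ := by
    rcases le_or_gt ((-μ * δ / σ + δ)/(D1 μ σ c δ * δ)) (a + |c| * δ) with h | h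
    · left
      have hcan : D1 μ σ c δ * δ * ((-μ * δ / σ + δ)/(D1 μ σ c δ * δ))
          = -μ * δ / σ + δ := by
        field_simp
      rw [hsdef, min_eq_left h, hcan]
    · right
      rw [hsdef, min_eq_right h.le]
  have hconv : σ * ((Real.exp (μ*s) - 1)/μ) = σ/μ * (Real.exp (μ*s) - 1) := by
    rw [mul_div_assoc', div_mul_eq_mul_div]
  have hSint : (∫ θ in (-s)..(0:ℝ), Real.exp (-μ*θ)) = (Real.exp (μ*s) - 1)/μ := by
    rw [expInt μ (-s) 0 hμ, show -μ*(-s) = μ*s by ring, show -μ*(0:ℝ) = 0 by ring,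
      Real.exp_zero]
  by_cases hE : 0 ≤ Real.exp (μ*(a + |c| * δ)) + σ/μ * (Real.exp (μ*s) - 1)
  · -- supremum attained at right endpoint
    have hEint : 0 ≤ Real.exp (μ*(a + |c| * δ))
        + σ * ∫ θ in (-s)..(0:ℝ), Real.exp (-μ*θ) := by
      rw [hSint, hconv]; exact hE
    have hub : ∀ u ∈ Set.Icc (-δ) (-μ * δ / σ),
        Ifun μ σ c a δ |c| u 2 ≤ Ifun μ σ c a δ |c| (-μ * δ / σ) 2 := fun u hu =>
      mono_step μ σ c a δ u (-μ * δ / σ) s hμ hσ hδ0 hr0.le hD hu.2 hs0 hsr hs2 hEint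
    have hmem : Ifun μ σ c a δ |c| (-μ * δ / σ) 2
        ∈ (fun uh => Ifun μ σ c a δ |c| uh 2) '' Set.Icc (-δ) (-μ * δ / σ) :=
      ⟨-μ * δ / σ, ⟨hue1, le_refl _⟩, rfl⟩
    have hgreat : IsGreatest
        ((fun uh => Ifun μ σ c a δ |c| uh 2) '' Set.Icc (-δ) (-μ * δ / σ))
        (Ifun μ σ c a δ |c| (-μ * δ / σ) 2) := by
      refine ⟨hmem, ?_⟩
      rintro y ⟨u, hu, rfl⟩
      exact hub u hu
    have hPval : Pfun μ σ c a δ 2 = Ifun μ σ c a δ |c| (-μ * δ / σ) 2 := by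
      unfold Pfun
      exact hgreat.csSup_eq
    constructor
    · intro hcase
      unfold rr at hcase
      have hkink : (a + |c| * δ) * (D1 μ σ c δ * δ) ≤ -μ * δ / σ + δ := by
        have h := mul_le_mul_of_nonneg_right hcase hδ0.le
        have he2 : -μ/σ*δ = -μ*δ/σ := by ring
        nlinarith
      rw [hPval, onepiece μ σ c a δ _ hμ hδ0 hr0.le hkink hD.le]
      unfold I1fun rr
      rw [show -δ*μ/σ = -μ*δ/σ by ring]
    · intro hcase
      unfold rr at hcase
      have hkink : -μ * δ / σ + δ ≤ (a + |c| * δ) * (D1 μ σ c δ * δ) := by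
        have h := mul_le_mul_of_nonneg_right hcase.le hδ0.le
        have he2 : -μ/σ*δ = -μ*δ/σ := by ring
        nlinarith
      rw [hPval, twopiece μ σ c a δ _ hμ hδ0 hr0.le hD hnum hkink]
      unfold I2fun rr
      rw [show -δ*μ/σ = -μ*δ/σ by ring]
  · -- contradiction with hP
    exfalso
    push_neg at hE
    have hneg : μ < 0 := by
      rcases hμ.lt_or_gt with h | h
      · exact h
      · exfalso
        have hDge' : μ - σ ≤ D1 μ σ c δ := by
          rw [abs_of_pos h, haσ] at hDge
          linarith
        exact absurd (Epos μ σ (D1 μ σ c δ) (a + |c| * δ) s h hσ hDge' hs0 hsr hsB)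
          (not_le.mpr hE)
    have hDge'' : -(μ + σ) ≤ D1 μ σ c δ := by
      rw [abs_of_neg hneg, haσ] at hDge
      linarith
    have hfr : Real.exp (μ*(a + |c| * δ))
        + σ/μ * (Real.exp (μ*(a + |c| * δ)) - 1) ≤ -1 :=
      Eneg μ σ (D1 μ σ c δ) (a + |c| * δ) s hneg h1 (by linarith) hDge'' hs0 hsB hE
    have hIval : Ifun μ σ c a δ |c| (-δ) 2
        = -δ * (Real.exp (μ*(a + |c| * δ)) - σ/μ)
          + σ/μ * δ * (D1 μ σ c δ/μ * (1 - 1) - Real.exp (μ*(a + |c| * δ))) := by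
      rw [twopiece μ σ c a δ (-δ) hμ hδ0 hr0.le hD (by norm_num)
        (by nlinarith [mul_nonneg hr0.le hDδ.le]),
        show μ * (δ + -δ) / (D1 μ σ c δ * δ) = 0 / (D1 μ σ c δ * δ) by ring,
        zero_div, Real.exp_zero]
    have hIlb : δ ≤ Ifun μ σ c a δ |c| (-δ) 2 := by
      rw [hIval]
      set E := Real.exp (μ*(a + |c| * δ)) with hEdef
      have hmul := mul_le_mul_of_nonneg_left hfr hδ0.le
      nlinarith [hmul]
    have hmem2 : Ifun μ σ c a δ |c| (-δ) 2
        ∈ (fun uh => Ifun μ σ c a δ |c| uh 2) '' Set.Icc (-δ) (-μ * δ / σ) :=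
      ⟨-δ, ⟨le_refl _, hue1⟩, rfl⟩
    have hbdd : BddAbove ((fun uh => Ifun μ σ c a δ |c| uh 2)
        '' Set.Icc (-δ) (-μ * δ / σ)) := by
      refine ⟨δ * Real.exp (μ*(a + |c| * δ))
        + σ * ∫ θ in (-(a + |c| * δ))..(0:ℝ), Real.exp (-μ*θ) * (-δ), ?_⟩
      rintro y ⟨u, hu, rfl⟩
      exact Ifun_bdd μ σ c a δ u hμ hσ hδ0 hr0.le (le_trans hu.2 hue2)
    have hPge : δ ≤ Pfun μ σ c a δ 2 := le_trans hIlb (le_csSup hbdd hmem2)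
    linarith
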